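/- Let K_n be the complete graph on vertices P_1, …, P_n with n ≥ 3, and let σ be the automorphism fixing P_1 and cyclically permuting P_2, …, P_n. Then the cyclic group H = ⟨σ⟩ of order n−1 acts harmonically on K_n, the quotient K_n/H has more than one vertex, and every element of H fixes the divisors P_2 + ⋯ + P_n and (n−1)P_1. -/

import Mathlib

open scoped Classical

namespace GraphDiv

variable {V : Type*}

/-- The Laplacian divisor of an integer-valued function on the vertices. -/
noncomputable def lap (G : SimpleGraph V) [Fintype V] (f : V → ℤ) : V → ℤ :=
  fun P => ∑ Q : V, if G.Adj P Q then f P - f Q else 0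

/-- Linear equivalence of divisors: `D ∼ D'` iff `D - D' = Δ(f)` for some `f`. -/
def LinEquiv (G : SimpleGraph V) [Fintype V] (D D' : V → ℤ) : Prop :=
  ∃ f : V → ℤ, D - D' = lap G f

/-- A divisor is effective if all its coefficients are nonnegative. -/
def Effective (D : V → ℤ) : Prop := ∀ P, 0 ≤ D P

/-- The degree of a divisor. -/
def degDiv [Fintype V] (D : V → ℤ) : ℤ := ∑ P : V, D P

/-- The complete linear system of a divisor. -/
def linSys (G : SimpleGraph V) [Fintype V] (D : V → ℤ) : Set (V → ℤ) :=
  {E | Effective E ∧ LinEquiv G E D}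

/-- `RankEq G D r` says the Baker–Norine rank of `D` equals `r`. -/
def RankEq (G : SimpleGraph V) [Fintype V] (D : V → ℤ) (r : ℤ) : Prop :=
  -1 ≤ r ∧
  (∀ E : V → ℤ, Effective E → degDiv E ≤ r → (linSys G (D - E)).Nonempty) ∧
  ∃ E : V → ℤ, Effective E ∧ degDiv E = r + 1 ∧ linSys G (D - E) = ∅

/-- The divisor consisting of a single vertex. -/
noncomputable def unit (P : V) : V → ℤ := fun Q => if Q = P then 1 else 0

/-- A graph is 2-edge-connected if it is connected and stays connected
after removing any single edge. -/
def TwoEdgeConnected (G : SimpleGraph V) : Prop :=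
  G.Connected ∧ ∀ v w : V, G.Adj v w → (G.deleteEdges {s(v, w)}).Connected

/-- Action of a graph automorphism on divisors. -/
def divAct {G : SimpleGraph V} (σ : G ≃g G) (D : V → ℤ) : V → ℤ :=
  fun v => D (σ.symm v)

/-- Two vertices lie in the same orbit of a subgroup of automorphisms. -/
def vrel {G : SimpleGraph V} (H : Subgroup (G ≃g G)) (v w : V) : Prop :=
  ∃ σ ∈ H, σ v = w

/-- An edge is collapsed in the quotient: its endpoints lie in the same vertex orbit. -/
def Collapsed {G : SimpleGraph V} (H : Subgroup (G ≃g G)) (e : Sym2 V) : Prop :=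
  ∃ a b : V, e = s(a, b) ∧ vrel H a b

/-- The quotient morphism `G → G/H` is harmonic: for every vertex `P`, the number of
edges at `P` lying above a given non-collapsed edge-orbit incident to the class of `P`
is independent of the choice of that edge-orbit. -/
def QuotHarmonic (G : SimpleGraph V) (H : Subgroup (G ≃g G)) : Prop :=
  ∀ (P : V) (e₁ e₂ : Sym2 V), e₁ ∈ G.edgeSet → e₂ ∈ G.edgeSet →
    (∃ σ ∈ H, P ∈ Sym2.map (⇑σ) e₁) → (∃ σ ∈ H, P ∈ Sym2.map (⇑σ) e₂) →
    ¬ Collapsed H e₁ → ¬ Collapsed H e₂ →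
    Nat.card {e : Sym2 V // e ∈ G.edgeSet ∧ P ∈ e ∧ ∃ σ ∈ H, Sym2.map (⇑σ) e = e₁} =
    Nat.card {e : Sym2 V // e ∈ G.edgeSet ∧ P ∈ e ∧ ∃ σ ∈ H, Sym2.map (⇑σ) e = e₂}

/-- `H` acts harmonically on `G`: for every subgroup `Δ ≤ H` the quotient morphism
`G → G/Δ` is harmonic. -/
def HarmonicAction (G : SimpleGraph V) (H : Subgroup (G ≃g G)) : Prop :=
  ∀ Δ : Subgroup (G ≃g G), Δ ≤ H → QuotHarmonic G Δ

/-- `P` is a Galois point with respect to `|D|`. -/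
def IsGaloisPoint (G : SimpleGraph V) [Fintype V] (D : V → ℤ) (P : V) : Prop :=
  RankEq G (D - unit P) 1 ∧
  (∀ Q : V, RankEq G (D - unit P - unit Q) 0) ∧
  ∃ H : Subgroup (G ≃g G), (Nat.card H : ℤ) = degDiv D - 1 ∧
    (∃ v w : V, ¬ vrel H v w) ∧
    HarmonicAction G H ∧
    ∃ E₁ E₂ : V → ℤ, E₁ ≠ E₂ ∧ E₁ ∈ linSys G (D - unit P) ∧ E₂ ∈ linSys G (D - unit P) ∧
      ∀ σ ∈ H, divAct σ E₁ = E₁ ∧ divAct σ E₂ = E₂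

/-- A divisor is `q`-reduced. -/
def QReduced (G : SimpleGraph V) [Fintype V] (q : V) (D : V → ℤ) : Prop :=
  (∀ P : V, P ≠ q → 0 ≤ D P) ∧
  ∀ S : Finset V, S.Nonempty → q ∉ S →
    ∃ P ∈ S, D P < (((G.neighborFinset P).filter (fun Q => Q ∉ S)).card : ℤ)

/-- The wheel graph on `m + 1` vertices: hub `none` and rim `some i` for `i : Fin m`,
with the rim a cycle via `i ↦ i + 1 (mod m)`. -/
def wheel (m : ℕ) : SimpleGraph (Option (Fin m)) where
  Adj v w :=
    match v, w with
    | none, none => False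
    | none, some _ => True
    | some _, none => True
    | some i, some j => i ≠ j ∧ ((i.val + 1) % m = j.val ∨ (j.val + 1) % m = i.val)
  symm := by
    constructor
    intro v w h
    cases v <;> cases w <;> simp_all <;> tauto
  loopless := by constructor; intro v; cases v <;> simp

/-- The 4-cycle `P₁P₂P₃P₄` with the chord `P₁P₃` (vertices `0,1,2,3`). -/
def g4 : SimpleGraph (Fin 4) :=
  SimpleGraph.fromRel (fun v w =>
    (v = 0 ∧ w = 1) ∨ (v = 1 ∧ w = 2) ∨ (v = 2 ∧ w = 3) ∨ (v = 3 ∧ w = 0) ∨ (v = 0 ∧ w = 2))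

end GraphDiv

open Fin.NatCast Fin.CommRing

open GraphDiv in
/-- On the complete graph on `Option (Fin m)` (`n = m + 1 ≥ 3`, `P₁ = none`), the
cyclic group generated by the automorphism fixing `P₁` and rotating the other
vertices has order `n - 1`, acts harmonically, has a quotient with more than one
vertex, and fixes the divisors `P₂ + ⋯ + Pₙ` and `(n-1)P₁`. -/
theorem stmt12 (m : ℕ) (hm : 2 ≤ m) :
    Nat.card (Subgroup.zpowers
        (SimpleGraph.Iso.completeGraph (Equiv.optionCongr (finRotate m)) :
          (⊤ : SimpleGraph (Option (Fin m))) ≃g ⊤)) = m ∧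
    HarmonicAction (⊤ : SimpleGraph (Option (Fin m)))
      (Subgroup.zpowers
        (SimpleGraph.Iso.completeGraph (Equiv.optionCongr (finRotate m)))) ∧
    (∃ v w : Option (Fin m),
      ¬ vrel (Subgroup.zpowers
          (SimpleGraph.Iso.completeGraph (Equiv.optionCongr (finRotate m)) :
            (⊤ : SimpleGraph (Option (Fin m))) ≃g ⊤)) v w) ∧
    ∀ τ ∈ Subgroup.zpowers
        (SimpleGraph.Iso.completeGraph (Equiv.optionCongr (finRotate m)) :
          (⊤ : SimpleGraph (Option (Fin m))) ≃g ⊤),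
      divAct τ (fun v => match v with | none => 0 | some _ => (1 : ℤ)) =
        (fun v => match v with | none => 0 | some _ => (1 : ℤ)) ∧
      divAct τ (fun v => match v with | none => (m : ℤ) | some _ => 0) =
        (fun v => match v with | none => (m : ℤ) | some _ => 0) := by
    -- write m = n + 1
  obtain ⟨n, rfl⟩ : ∃ n, m = n + 1 := ⟨m - 1, by omega⟩
  set σG : (⊤ : SimpleGraph (Option (Fin (n+1)))) ≃g ⊤ :=
    SimpleGraph.Iso.completeGraph (Equiv.optionCongr (finRotate (n+1))) with hσGdef
  -- basic action facts
  have hσ : ∀ v, σG v = Option.map (· + (1 : Fin (n+1))) v := by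
    intro v
    cases v with
    | none => rfl
    | some i =>
      show some (finRotate (n+1) i) = some (i + 1)
      rw [finRotate_succ_apply]
  have hσinv : ∀ v, σG⁻¹ v = Option.map (· + (-1 : Fin (n+1))) v := by
    intro v
    apply σG.injective
    rw [show σG (σG⁻¹ v) = v from σG.apply_symm_apply v, hσ]
    cases v with
    | none => rfl
    | some i => simp only [Option.map_some, Option.some.injEq]; ring
  have hpow : ∀ (k : ℕ) (v : Option (Fin (n+1))),
      (σG ^ k) v = Option.map (· + (k : Fin (n+1))) v := by
    intro k
    induction k with
    | zero => intro v; rw [pow_zero]; cases v <;> simp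
    | succ k ih =>
      intro v
      rw [pow_succ]
      show (σG ^ k) (σG v) = _
      rw [ih (σG v), hσ v]
      cases v with
      | none => rfl
      | some i =>
        simp only [Option.map_some, Option.some.injEq]
        push_cast
        ring
  have hform : ∀ τ ∈ Subgroup.zpowers σG,
      ∃ c : Fin (n+1), ∀ v, τ v = Option.map (· + c) v := by
    intro τ hτ
    obtain ⟨k, rfl⟩ := Subgroup.mem_zpowers_iff.mp hτ
    clear hτ
    induction k using Int.induction_on with
    | zero => exact ⟨0, fun v => by rw [zpow_zero]; cases v <;> simp⟩
    | succ k ih =>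
      obtain ⟨c, hc⟩ := ih
      refine ⟨c + 1, fun v => ?_⟩
      rw [zpow_add_one]
      show (σG ^ (k : ℤ)) (σG v) = _
      rw [hc (σG v), hσ v]
      cases v with
      | none => rfl
      | some i => simp only [Option.map_some, Option.some.injEq]; ring
    | pred k ih =>
      obtain ⟨c, hc⟩ := ih
      refine ⟨c + (-1), fun v => ?_⟩
      rw [zpow_sub_one]
      show (σG ^ (-(k:ℤ))) (σG⁻¹ v) = _
      rw [hc (σG⁻¹ v), hσinv v]
      cases v with
      | none => rfl
      | some i => simp only [Option.map_some, Option.some.injEq]; ring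
  refine ⟨?_, ?_, ?_, ?_⟩
  · -- cardinality
    rw [Nat.card_zpowers]
    rw [orderOf_eq_iff (by omega)]
    constructor
    · ext v
      · rw [hpow (n+1) v, Fin.natCast_self]
        cases v <;> simp
    · intro k hk hk0 h
      have h0 : (σG ^ k) (some 0) = some 0 := by rw [h]; rfl
      rw [hpow k (some 0)] at h0
      simp only [Option.map_some, Option.some.injEq, zero_add] at h0
      have : ((k : Fin (n+1)) : ℕ) = 0 := by rw [h0]; rfl
      rw [Fin.val_natCast, Nat.mod_eq_of_lt hk] at this
      omega
  · -- harmonic action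
    intro Δ hΔ P e₁ e₂ he₁ he₂ hin₁ hin₂ hnc₁ hnc₂
    have hformΔ : ∀ τ ∈ Δ, ∃ c : Fin (n+1), ∀ v, τ v = Option.map (· + c) v :=
      fun τ hτ => hform τ (hΔ hτ)
    cases P with
    | some i =>
      have claim : ∀ e₀ : Sym2 (Option (Fin (n+1))),
          e₀ ∈ (⊤ : SimpleGraph (Option (Fin (n+1)))).edgeSet →
          (∃ τ ∈ Δ, (some i : Option (Fin (n+1))) ∈ Sym2.map (⇑τ) e₀) →
          ¬ Collapsed Δ e₀ →
          Nat.card {e : Sym2 (Option (Fin (n+1))) //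
            e ∈ (⊤ : SimpleGraph (Option (Fin (n+1)))).edgeSet ∧ some i ∈ e ∧
            ∃ τ ∈ Δ, Sym2.map (⇑τ) e = e₀} = 1 := by
        intro e₀ he₀ hin hnc
        rw [Nat.card_eq_one_iff_unique]
        constructor
        · refine ⟨fun X Y => ?_⟩
          obtain ⟨e, he, hPe, τ, hτ, hmap⟩ := X
          obtain ⟨e', he', hPe', τ', hτ', hmap'⟩ := Y
          apply Subtype.ext
          show e = e'
          obtain ⟨x, rfl⟩ := Sym2.mem_iff_exists.mp hPe
          obtain ⟨y, rfl⟩ := Sym2.mem_iff_exists.mp hPe'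
          set ρ : (⊤ : SimpleGraph (Option (Fin (n+1)))) ≃g ⊤ := τ'⁻¹ * τ with hρdef
          have hρ : ρ ∈ Δ := mul_mem (inv_mem hτ') hτ
          have hcompid : (⇑(τ'⁻¹) ∘ ⇑τ') = id := funext fun z => τ'.symm_apply_apply z
          have hρmap : Sym2.map (⇑ρ) s(some i, x) = s(some i, y) := by
            have h1 : ⇑ρ = ⇑(τ'⁻¹) ∘ ⇑τ := rfl
            rw [h1, ← Sym2.map_map, hmap, ← hmap', Sym2.map_map, hcompid, Sym2.map_id, id]
          obtain ⟨c, hc⟩ := hformΔ ρ hρ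
          rw [Sym2.map_pair_eq, hc, hc] at hρmap
          simp only [Option.map_some] at hρmap
          rcases Sym2.eq_iff.mp hρmap with ⟨h1, h2⟩ | ⟨h1, h2⟩
          · have hc0 : c = 0 := by
              have h := Option.some.inj h1
              linear_combination h
            subst hc0
            rw [show Option.map (· + (0 : Fin (n+1))) x = x from by cases x <;> simp] at h2
            rw [h2]
          · exfalso
            apply hnc
            have hρx : ρ x = some i := by rw [hc]; exact h2
            have hρinv : ρ⁻¹ (some i) = x := by
              rw [← hρx]; exact ρ.symm_apply_apply x
            refine ⟨τ (some i), τ x, ?_, τ * ρ⁻¹ * τ⁻¹,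
              mul_mem (mul_mem hτ (inv_mem hρ)) (inv_mem hτ), ?_⟩
            · rw [← hmap, Sym2.map_pair_eq]
            · show τ (ρ⁻¹ (τ⁻¹ (τ (some i)))) = τ x
              rw [show τ⁻¹ (τ (some i)) = some i from τ.symm_apply_apply _, hρinv]
        · obtain ⟨τ, hτ, hPin⟩ := hin
          refine ⟨⟨Sym2.map (⇑τ) e₀, ?_, hPin, τ⁻¹, inv_mem hτ, ?_⟩⟩
          · induction e₀ using Sym2.ind with
            | _ a b =>
              rw [Sym2.map_pair_eq, SimpleGraph.mem_edgeSet, SimpleGraph.top_adj]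
              have hab : a ≠ b := (SimpleGraph.top_adj a b).mp
                ((SimpleGraph.mem_edgeSet _).mp he₀)
              exact fun h => hab (τ.injective h)
          · rw [Sym2.map_map,
              show (⇑(τ⁻¹) ∘ ⇑τ) = id from funext fun z => τ.symm_apply_apply z,
              Sym2.map_id, id]
      exact (claim e₁ he₁ hin₁ hnc₁).trans (claim e₂ he₂ hin₂ hnc₂).symm
    | none =>
      have getj : ∀ e₀ : Sym2 (Option (Fin (n+1))),
          e₀ ∈ (⊤ : SimpleGraph (Option (Fin (n+1)))).edgeSet →
          (∃ τ ∈ Δ, (none : Option (Fin (n+1))) ∈ Sym2.map (⇑τ) e₀) →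
          ∃ j : Fin (n+1), e₀ = s(none, some j) := by
        rintro e₀ he₀ ⟨τ, hτ, hmem⟩
        obtain ⟨a, ha, hτa⟩ := Sym2.mem_map.mp hmem
        obtain ⟨c, hc⟩ := hformΔ τ hτ
        have ha' : a = none := by
          cases a with
          | none => rfl
          | some b => rw [hc] at hτa; simp at hτa
        subst ha'
        obtain ⟨x, rfl⟩ := Sym2.mem_iff_exists.mp ha
        cases x with
        | none =>
          exact absurd rfl ((SimpleGraph.top_adj _ _).mp ((SimpleGraph.mem_edgeSet _).mp he₀))
        | some j => exact ⟨j, rfl⟩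
      obtain ⟨j₁, rfl⟩ := getj e₁ he₁ hin₁
      obtain ⟨j₂, rfl⟩ := getj e₂ he₂ hin₂
      have key : ∀ (j t : Fin (n+1)) (e : Sym2 (Option (Fin (n+1)))),
          (e ∈ (⊤ : SimpleGraph (Option (Fin (n+1)))).edgeSet ∧ (none : Option (Fin (n+1))) ∈ e ∧
            ∃ τ ∈ Δ, Sym2.map (⇑τ) e = s(none, some j)) →
          (Sym2.map (Option.map (· + t)) e ∈ (⊤ : SimpleGraph (Option (Fin (n+1)))).edgeSet ∧
            (none : Option (Fin (n+1))) ∈ Sym2.map (Option.map (· + t)) e ∧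
            ∃ τ ∈ Δ, Sym2.map (⇑τ) (Sym2.map (Option.map (· + t)) e) = s(none, some (j + t))) := by
        rintro j t e ⟨he, hP, τ, hτ, hmap⟩
        obtain ⟨x, rfl⟩ := Sym2.mem_iff_exists.mp hP
        have hne : (none : Option (Fin (n+1))) ≠ x :=
          (SimpleGraph.top_adj _ _).mp ((SimpleGraph.mem_edgeSet _).mp he)
        cases x with
        | none => exact absurd rfl hne
        | some a =>
          obtain ⟨c, hc⟩ := hformΔ τ hτ
          rw [Sym2.map_pair_eq, hc, hc] at hmap
          simp only [Option.map_some, Option.map_none] at hmap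
          have hac : a + c = j := by
            rcases Sym2.eq_iff.mp hmap with ⟨_, h⟩ | ⟨h, _⟩
            · exact Option.some.inj h
            · exact absurd h (by simp)
          refine ⟨?_, ?_, τ, hτ, ?_⟩
          · rw [Sym2.map_pair_eq]
            simp only [Option.map_some, Option.map_none]
            rw [SimpleGraph.mem_edgeSet, SimpleGraph.top_adj]
            simp
          · rw [Sym2.map_pair_eq]
            simp only [Option.map_some, Option.map_none]
            exact Sym2.mem_mk_left _ _
          · rw [Sym2.map_pair_eq]
            simp only [Option.map_some, Option.map_none]
            rw [Sym2.map_pair_eq, hc, hc]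
            simp only [Option.map_some, Option.map_none]
            rw [show a + t + c = j + t from by rw [← hac]; ring]
      have invc : ∀ (t : Fin (n+1)) (e : Sym2 (Option (Fin (n+1)))),
          Sym2.map (Option.map (· + (-t))) (Sym2.map (Option.map (· + t)) e) = e := by
        intro t e
        rw [Sym2.map_map,
          show (Option.map (· + (-t)) ∘ Option.map (· + t)) = id from by
            funext v
            cases v with
            | none => rfl
            | some a =>
              show some (a + t + (-t)) = some a
              rw [add_neg_cancel_right],
          Sym2.map_id, id]
      refine Nat.card_congr
        ⟨fun x => ⟨Sym2.map (Option.map (· + (j₂ - j₁))) x.1, by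
            have h := key j₁ (j₂ - j₁) x.1 x.2
            rwa [show j₁ + (j₂ - j₁) = j₂ from by ring] at h⟩,
         fun y => ⟨Sym2.map (Option.map (· + (-(j₂ - j₁)))) y.1, by
            have h := key j₂ (-(j₂ - j₁)) y.1 y.2
            rwa [show j₂ + (-(j₂ - j₁)) = j₁ from by ring] at h⟩,
         fun x => Subtype.ext (invc _ x.1),
         fun y => Subtype.ext (by
            have h := invc (-(j₂ - j₁)) y.1
            rwa [neg_neg] at h)⟩
  · -- quotient has more than one vertex
    refine ⟨none, some 0, ?_⟩
    rintro ⟨τ, hτ, hmap⟩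
    obtain ⟨c, hc⟩ := hform τ hτ
    rw [hc] at hmap
    simp at hmap
  · -- fixed divisors
    intro τ hτ
    obtain ⟨c, hc⟩ := hform τ⁻¹ (inv_mem hτ)
    have hsymm : ∀ v, τ.symm v = Option.map (· + c) v := hc
    have hDfix : ∀ (D : Option (Fin (n+1)) → ℤ),
        (∀ a b : Fin (n+1), D (some a) = D (some b)) → divAct τ D = D := by
      intro D hD
      funext v
      show D (τ.symm v) = D v
      rw [hsymm v]
      cases v with
      | none => rfl
      | some a => exact hD _ _
    exact ⟨hDfix _ (fun a b => rfl), hDfix _ (fun a b => rfl)⟩
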